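/- (The explicit kernel solves the kernel equations in the example.) Let γ > 0, b > 0, T > 0 and ρ₁, ρ₂ ∈ ℝ, set c = γ T e^{b(ρ₁ + ρ₂)}, and define k(σ̄, ȳ) = −c · exp( (2bT + c)(σ̄ − ȳ) ) on the triangle 𝒯 = {(σ̄, ȳ) ∈ [0,1]² : 0 ≤ ȳ ≤ σ̄ ≤ 1}. Then k is C¹ and satisfies ∂k/∂σ̄(σ̄,ȳ) + ∂k/∂ȳ(σ̄,ȳ) = 0 on 𝒯, and for every σ̄ ∈ [0,1], k(σ̄, 0) = ∫₀^{σ̄} k(σ̄, ȳ) G(ȳ) dȳ − G(σ̄), where G(ȳ) = γ T e^{b(ρ₁ + ρ₂)} e^{2bT ȳ}. -/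
import Mathlib


/-- (The explicit kernel solves the kernel equations in the example.)
With `c = γ T e^{b(ρ₁+ρ₂)}` and `k(σ̄,ȳ) = -c exp((2bT + c)(σ̄ - ȳ))`, the kernel `k`
is `C¹` on the triangle `𝒯 = {(σ̄,ȳ) : 0 ≤ ȳ ≤ σ̄ ≤ 1}`, satisfies
`∂k/∂σ̄ + ∂k/∂ȳ = 0` on `𝒯`, and for every `σ̄ ∈ [0,1]`,
`k(σ̄,0) = ∫₀^σ̄ k(σ̄,ȳ) G(ȳ) dȳ - G(σ̄)`, where `G(ȳ) = γ T e^{b(ρ₁+ρ₂)} e^{2bT ȳ}`. -/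
theorem example_kernel_solves_kernel_equations
    (γ b T ρ₁ ρ₂ : ℝ) (hγ : 0 < γ) (hb : 0 < b) (hT : 0 < T)
    (c : ℝ) (hc : c = γ * T * Real.exp (b * (ρ₁ + ρ₂)))
    (k : ℝ → ℝ → ℝ)
    (hk : ∀ σbar ybar, k σbar ybar = -c * Real.exp ((2 * b * T + c) * (σbar - ybar))) :
    ContDiffOn ℝ 1 (fun p : ℝ × ℝ => k p.1 p.2)
      {p : ℝ × ℝ | 0 ≤ p.2 ∧ p.2 ≤ p.1 ∧ p.1 ≤ 1} ∧
    (∀ σbar ybar : ℝ, 0 ≤ ybar → ybar ≤ σbar → σbar ≤ 1 →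
      deriv (fun s => k s ybar) σbar + deriv (fun y => k σbar y) ybar = 0) ∧
    (∀ σbar ∈ Set.Icc (0:ℝ) 1,
      k σbar 0
        = (∫ ybar in (0:ℝ)..σbar,
            k σbar ybar * (γ * T * Real.exp (b * (ρ₁ + ρ₂)) * Real.exp (2 * b * T * ybar)))
          - γ * T * Real.exp (b * (ρ₁ + ρ₂)) * Real.exp (2 * b * T * σbar)) := by
  have hcpos : 0 < c := by
    rw [hc]; positivity
  refine ⟨?_, ?_, ?_⟩
  · apply ContDiff.contDiffOn
    simp only [hk]
    fun_prop
  · intro σbar ybar _ _ _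
    simp only [hk]
    have h1 : HasDerivAt (fun s : ℝ => -c * Real.exp ((2 * b * T + c) * (s - ybar)))
        (-c * (Real.exp ((2 * b * T + c) * (σbar - ybar)) * ((2 * b * T + c) * 1))) σbar :=
      ((((hasDerivAt_id σbar).sub_const ybar).const_mul (2 * b * T + c)).exp).const_mul (-c)
    have h2 : HasDerivAt (fun y : ℝ => -c * Real.exp ((2 * b * T + c) * (σbar - y)))
        (-c * (Real.exp ((2 * b * T + c) * (σbar - ybar)) * ((2 * b * T + c) * (0 - 1)))) ybar :=
      ((((hasDerivAt_const ybar σbar).sub (hasDerivAt_id ybar)).const_mul (2 * b * T + c)).exp).const_mul (-c)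
    rw [h1.deriv, h2.deriv]
    ring
  · intro σbar _
    have hF : ∀ y ∈ Set.uIcc (0:ℝ) σbar,
        HasDerivAt (fun y : ℝ => c * Real.exp ((2 * b * T + c) * σbar + (-c) * y))
          (k σbar y * (γ * T * Real.exp (b * (ρ₁ + ρ₂)) * Real.exp (2 * b * T * y))) y := by
      intro y _
      have h : HasDerivAt (fun y : ℝ => c * Real.exp ((2 * b * T + c) * σbar + (-c) * y))
          (c * (Real.exp ((2 * b * T + c) * σbar + (-c) * y) * (-c * 1))) y :=
        ((((hasDerivAt_id y).const_mul (-c)).const_add ((2 * b * T + c) * σbar)).exp).const_mul c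
      convert h using 1
      rw [hk, ← hc]
      rw [show (2 * b * T + c) * σbar + (-c) * y = (2 * b * T + c) * (σbar - y) + 2 * b * T * y by ring,
        Real.exp_add]
      ring
    have hint : IntervalIntegrable
        (fun y => k σbar y * (γ * T * Real.exp (b * (ρ₁ + ρ₂)) * Real.exp (2 * b * T * y)))
        MeasureTheory.volume 0 σbar := by
      apply Continuous.intervalIntegrable
      simp only [hk]
      fun_prop
    rw [intervalIntegral.integral_eq_sub_of_hasDerivAt hF hint]
    rw [hk, ← hc]
    rw [show (2 * b * T + c) * σbar + (-c) * σbar = 2 * b * T * σbar by ring]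
    simp only [mul_zero, add_zero]
    ring
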